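/- Let ψ be a branching mechanism and let 0 ≤ p < q with μ := ψ(p) and λ := ψ(q) satisfying 0 ≤ μ < λ. Then ψ'(q) > 0, and the numbers ξ_{μ,λ}(0) = (λ−μ)/((q−p) ψ'(q)), ξ_{μ,λ}(1) = 0, and ξ_{μ,λ}(k) = |ψ^{(k)}(q)| (q−p)^{k−1}/(k! ψ'(q)) for k ≥ 2, form a probability distribution on ℕ whose generating function is φ_{μ,λ}(s) = Σ_{k≥0} ξ_{μ,λ}(k) s^k = s + ( ψ(q − s(q−p)) − μ )/((q−p) ψ'(q)) for s ∈ [0,1]. Moreover, if p > 0 then φ'_{μ,λ}(1) = 1 − ψ'(p)/ψ'(q) ≤ 1, with strict inequality whenever ψ'(p) > 0. -/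

import Mathlib

open MeasureTheory

/-- `ψ` is a branching mechanism with parameters `(α, β, ν)`:
`ψ(c) = αc + βc² + ∫ (e^{-cx} - 1 + cx 1_{x<1}) ν(dx)` for all `c ≥ 0`, where `β ≥ 0` and
`ν` is a measure on `(0,∞)` with `∫ min(1,x²) ν(dx) < ∞`. -/
def IsBMWith (ψ : ℝ → ℝ) (α β : ℝ) (ν : Measure ℝ) : Prop :=
  0 ≤ β ∧ ν (Set.Iic 0) = 0 ∧ (∫⁻ x, ENNReal.ofReal (min 1 (x ^ 2)) ∂ν) < ⊤ ∧
    ∀ c : ℝ, 0 ≤ c →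
      ψ c = α * c + β * c ^ 2
        + ∫ x, (Real.exp (-(c * x)) - 1 + (if x < 1 then c * x else 0)) ∂ν

/-- `ψ` is a branching mechanism: it is of Lévy–Khintchine form for some parameters. -/
def IsBranchingMechanism (ψ : ℝ → ℝ) : Prop :=
  ∃ (α β : ℝ) (ν : Measure ℝ), IsBMWith ψ α β ν

/-- The offspring distribution `ξ_{μ,λ}` associated with a branching mechanism `ψ` at
`p = ψ^{-1}(μ)`, `q = ψ^{-1}(λ)` (so `μ = ψ(p)`, `λ = ψ(q)`). -/
noncomputable def xiML (ψ : ℝ → ℝ) (p q : ℝ) : ℕ → ℝ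
  | 0 => (ψ q - ψ p) / ((q - p) * derivWithin ψ (Set.Ioi 0) q)
  | 1 => 0
  | (k + 2) => |iteratedDerivWithin (k + 2) ψ (Set.Ioi 0) q| * (q - p) ^ (k + 1) /
      ((Nat.factorial (k + 2) : ℝ) * derivWithin ψ (Set.Ioi 0) q)

section BMAux
open Real

namespace BMProof

lemma exp_neg_nonneg {y : ℝ} : 0 ≤ Real.exp (-y) - 1 + y ∨ True := Or.inr trivial

lemma key_lb {y : ℝ} : 0 ≤ Real.exp (-y) - 1 + y := by
  nlinarith [Real.add_one_le_exp (-y)]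

lemma key_ub {y : ℝ} (hy : 0 ≤ y) : Real.exp (-y) - 1 + y ≤ y ^ 2 := by
  rcases le_or_gt y 1 with h | h
  · have h2 := Real.abs_exp_sub_one_sub_id_le (x := -y)
      (by rw [abs_neg, abs_of_nonneg hy]; exact h)
    rw [abs_le] at h2
    nlinarith [h2.2]
  · have h1 : Real.exp (-y) ≤ 1 := Real.exp_le_one_iff.mpr (by linarith)
    nlinarith

lemma exp_sub_le {y : ℝ} (hy : 0 ≤ y) : Real.exp y - 1 - y ≤ y ^ 2 * Real.exp y := by
  have h1 : 1 - y ≤ Real.exp (-y) := by nlinarith [Real.add_one_le_exp (-y)]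
  have h3 : Real.exp (-y) ≤ 1 := Real.exp_le_one_iff.mpr (by linarith)
  have h2 : Real.exp (-y) * Real.exp y = 1 := by rw [← Real.exp_add]; simp
  nlinarith [Real.exp_pos y, mul_le_mul_of_nonneg_right h1 (Real.exp_pos y).le,
    mul_le_mul_of_nonneg_left (mul_le_mul_of_nonneg_left h1 hy) (Real.exp_pos y).le]

lemma exp_sub_one_le {y : ℝ} (hy : 0 ≤ y) : Real.exp y - 1 ≤ y * Real.exp y := by
  have h1 : 1 - y ≤ Real.exp (-y) := by nlinarith [Real.add_one_le_exp (-y)]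
  have h2 : Real.exp (-y) * Real.exp y = 1 := by rw [← Real.exp_add]; simp
  nlinarith [Real.exp_pos y, mul_le_mul_of_nonneg_right h1 (Real.exp_pos y).le]

lemma one_sub_exp_neg_le {y : ℝ} : 1 - Real.exp (-y) ≤ y := by
  nlinarith [Real.add_one_le_exp (-y)]

lemma pow_exp_bound {k : ℕ} (hk : 2 ≤ k) {c x : ℝ} (hc : 0 < c) (hx : 0 < x) :
    x ^ k * Real.exp (-(c * x)) ≤ max 1 ((k.factorial : ℝ) / c ^ k) * min 1 (x ^ 2) := by
  have hcx : 0 ≤ c * x := by positivity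
  have hek : Real.exp (-(c * x)) ≤ 1 := Real.exp_le_one_iff.mpr (by linarith)
  have hep : 0 < Real.exp (-(c * x)) := Real.exp_pos _
  rcases le_or_gt x 1 with h | h
  · have hmin : min 1 (x ^ 2) = x ^ 2 := min_eq_right (by nlinarith)
    have hpk : x ^ k ≤ x ^ 2 := pow_le_pow_of_le_one hx.le h hk
    have : x ^ k * Real.exp (-(c * x)) ≤ x ^ 2 := by nlinarith [pow_pos hx k, pow_pos hx 2]
    calc x ^ k * Real.exp (-(c * x)) ≤ 1 * (x ^ 2) := by linarith
    _ ≤ max 1 ((k.factorial : ℝ) / c ^ k) * min 1 (x ^ 2) := by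
        rw [hmin]; gcongr; exact le_max_left _ _
  · have hmin : min 1 (x ^ 2) = 1 := min_eq_left (by nlinarith)
    have h1 : (c * x) ^ k / (k.factorial : ℝ) ≤ Real.exp (c * x) :=
      Real.pow_div_factorial_le_exp _ hcx k
    have hf : (0:ℝ) < (k.factorial : ℝ) := by exact_mod_cast k.factorial_pos
    have h2 : (c * x) ^ k ≤ (k.factorial : ℝ) * Real.exp (c * x) := by
      rw [div_le_iff₀ hf] at h1; linarith
    have hee : Real.exp (c * x) * Real.exp (-(c * x)) = 1 := by rw [← Real.exp_add]; simp
    have h3 : (c * x) ^ k * Real.exp (-(c * x)) ≤ (k.factorial : ℝ) := by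
      calc (c * x) ^ k * Real.exp (-(c * x))
          ≤ ((k.factorial : ℝ) * Real.exp (c * x)) * Real.exp (-(c * x)) := by
            exact mul_le_mul_of_nonneg_right h2 hep.le
        _ = (k.factorial : ℝ) := by rw [mul_assoc, hee, mul_one]
    have hck : (0:ℝ) < c ^ k := pow_pos hc k
    have h4 : x ^ k * Real.exp (-(c * x)) ≤ (k.factorial : ℝ) / c ^ k := by
      rw [le_div_iff₀ hck]
      calc x ^ k * Real.exp (-(c * x)) * c ^ k = (c * x) ^ k * Real.exp (-(c * x)) := by
            rw [mul_pow]; ring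
        _ ≤ (k.factorial : ℝ) := h3
    calc x ^ k * Real.exp (-(c * x)) ≤ (k.factorial : ℝ) / c ^ k := h4
      _ ≤ max 1 ((k.factorial : ℝ) / c ^ k) * 1 := by rw [mul_one]; exact le_max_right _ _
      _ = max 1 ((k.factorial : ℝ) / c ^ k) * min 1 (x ^ 2) := by rw [hmin]

variable {ν : Measure ℝ}

lemma ae_pos (hν0 : ν (Set.Iic 0) = 0) : ∀ᵐ x ∂ν, 0 < x := by
  rw [ae_iff]
  convert hν0 using 2
  ext x; simp [not_lt]

lemma integrable_min (hν2 : (∫⁻ x, ENNReal.ofReal (min 1 (x ^ 2)) ∂ν) < ⊤) :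
    Integrable (fun x => min 1 (x ^ 2)) ν := by
  have hm : Measurable fun x : ℝ => min 1 (x ^ 2) := by fun_prop
  refine ⟨hm.aestronglyMeasurable, ?_⟩
  rw [hasFiniteIntegral_iff_ofReal ?_]
  · exact hν2
  · exact Filter.Eventually.of_forall fun x => le_min one_pos.le (sq_nonneg x)

lemma integrable_of_le_min (hν0 : ν (Set.Iic 0) = 0)
    (hν2 : (∫⁻ x, ENNReal.ofReal (min 1 (x ^ 2)) ∂ν) < ⊤) {f : ℝ → ℝ}
    (hf : AEStronglyMeasurable f ν) {C : ℝ}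
    (h : ∀ x, 0 < x → ‖f x‖ ≤ C * min 1 (x ^ 2)) : Integrable f ν :=
  (((integrable_min hν2).const_mul C)).mono' hf ((ae_pos hν0).mono fun x hx => h x hx)

/-- the integrand of ψ -/
noncomputable def Kf (c x : ℝ) : ℝ := Real.exp (-(c * x)) - 1 + (if x < 1 then c * x else 0)

/-- the integrand of ψ' -/
noncomputable def Hf (c x : ℝ) : ℝ := (if x < 1 then x else 0) - x * Real.exp (-(c * x))

lemma measurable_Kf (c : ℝ) : Measurable (Kf c) := by
  unfold Kf
  refine (((Real.measurable_exp.comp (by fun_prop))).sub measurable_const).add ?_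
  exact Measurable.ite measurableSet_Iio (by fun_prop) (by fun_prop)

lemma measurable_Hf (c : ℝ) : Measurable (Hf c) := by
  unfold Hf
  refine Measurable.sub ?_ (by fun_prop)
  exact Measurable.ite measurableSet_Iio (by fun_prop) (by fun_prop)

lemma Kf_bound {c x : ℝ} (hc : 0 ≤ c) (hx : 0 < x) :
    ‖Kf c x‖ ≤ max 1 (c ^ 2) * min 1 (x ^ 2) := by
  unfold Kf
  have hcx : 0 ≤ c * x := by positivity
  rcases lt_or_ge x 1 with h | h
  · rw [if_pos h]
    have h1 : 0 ≤ Real.exp (-(c*x)) - 1 + c*x := by nlinarith [Real.add_one_le_exp (-(c*x))]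
    have h2 : Real.exp (-(c*x)) - 1 + c*x ≤ (c*x) ^ 2 := key_ub hcx
    have hmin : min 1 (x ^ 2) = x ^ 2 := min_eq_right (by nlinarith)
    rw [Real.norm_eq_abs, abs_of_nonneg (by linarith)]
    calc Real.exp (-(c * x)) - 1 + c * x ≤ (c * x) ^ 2 := h2
      _ = c ^ 2 * x ^ 2 := by ring
      _ ≤ max 1 (c ^ 2) * min 1 (x ^ 2) := by
          rw [hmin]; gcongr; exact le_max_right _ _
  · rw [if_neg (not_lt.mpr h)]
    have hek : Real.exp (-(c * x)) ≤ 1 := Real.exp_le_one_iff.mpr (by linarith)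
    have hep : 0 < Real.exp (-(c * x)) := Real.exp_pos _
    have hmin : min 1 (x ^ 2) = 1 := min_eq_left (by nlinarith)
    rw [add_zero, Real.norm_eq_abs, abs_of_nonpos (by linarith)]
    calc -(Real.exp (-(c * x)) - 1) ≤ 1 := by linarith
      _ ≤ max 1 (c ^ 2) * 1 := by nlinarith [le_max_left 1 (c ^ 2)]
      _ = max 1 (c ^ 2) * min 1 (x ^ 2) := by rw [hmin]

lemma Hf_bound {b B c x : ℝ} (hb : 0 < b) (hbc : b ≤ c) (hcB : c ≤ B) (hx : 0 < x) :
    ‖Hf c x‖ ≤ max B (1 / b) * min 1 (x ^ 2) := by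
  unfold Hf
  have hc : 0 < c := lt_of_lt_of_le hb hbc
  have hcx : 0 ≤ c * x := by positivity
  have hek : Real.exp (-(c * x)) ≤ 1 := Real.exp_le_one_iff.mpr (by linarith)
  have hep : 0 < Real.exp (-(c * x)) := Real.exp_pos _
  rcases lt_or_ge x 1 with h | h
  · rw [if_pos h]
    have h1 : 1 - Real.exp (-(c * x)) ≤ c * x := by nlinarith [Real.add_one_le_exp (-(c*x))]
    have hmin : min 1 (x ^ 2) = x ^ 2 := min_eq_right (by nlinarith)
    rw [Real.norm_eq_abs, abs_of_nonneg (by nlinarith)]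
    calc x - x * Real.exp (-(c * x)) = x * (1 - Real.exp (-(c * x))) := by ring
      _ ≤ x * (c * x) := by nlinarith
      _ = c * x ^ 2 := by ring
      _ ≤ max B (1 / b) * min 1 (x ^ 2) := by
          rw [hmin]
          exact mul_le_mul_of_nonneg_right (hcB.trans (le_max_left _ _)) (sq_nonneg x)
  · rw [if_neg (not_lt.mpr h)]
    have hmin : min 1 (x ^ 2) = 1 := min_eq_left (by nlinarith)
    have hbx : 0 ≤ b * x := by positivity
    have h1 : b * x * Real.exp (-(b * x)) ≤ 1 := by
      have h2 : b * x + 1 ≤ Real.exp (b * x) := Real.add_one_le_exp _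
      have hee : Real.exp (b * x) * Real.exp (-(b * x)) = 1 := by rw [← Real.exp_add]; simp
      nlinarith [Real.exp_pos (-(b * x)), mul_le_mul_of_nonneg_right h2 (Real.exp_pos (-(b*x))).le]
    have hmono : Real.exp (-(c * x)) ≤ Real.exp (-(b * x)) := by
      apply Real.exp_le_exp.mpr; nlinarith
    rw [zero_sub, norm_neg, Real.norm_eq_abs, abs_of_nonneg (by positivity)]
    calc x * Real.exp (-(c * x)) ≤ x * Real.exp (-(b * x)) := by nlinarith
      _ = (b * x * Real.exp (-(b * x))) / b := by field_simp
      _ ≤ 1 / b := by gcongr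
      _ ≤ max B (1 / b) * min 1 (x ^ 2) := by
          rw [hmin, mul_one]; exact le_max_right _ _
lemma mem_ball_half {c c' : ℝ} (h : c' ∈ Metric.ball c (c / 2)) :
    c / 2 ≤ c' ∧ c' ≤ 3 * c / 2 := by
  rw [Metric.mem_ball, Real.dist_eq, abs_sub_lt_iff] at h
  constructor <;> linarith [h.1, h.2]

lemma exp_neg_mono {b c x : ℝ} (hbc : b ≤ c) (hx : 0 ≤ x) :
    Real.exp (-(c * x)) ≤ Real.exp (-(b * x)) :=
  Real.exp_le_exp.mpr (by nlinarith)

lemma integrable_Kf (hν0 : ν (Set.Iic 0) = 0)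
    (hν2 : (∫⁻ x, ENNReal.ofReal (min 1 (x ^ 2)) ∂ν) < ⊤) {c : ℝ} (hc : 0 ≤ c) :
    Integrable (Kf c) ν :=
  integrable_of_le_min hν0 hν2 (measurable_Kf c).aestronglyMeasurable
    (fun x hx => Kf_bound hc hx)

lemma integrable_Hf (hν0 : ν (Set.Iic 0) = 0)
    (hν2 : (∫⁻ x, ENNReal.ofReal (min 1 (x ^ 2)) ∂ν) < ⊤) {c : ℝ} (hc : 0 < c) :
    Integrable (Hf c) ν :=
  integrable_of_le_min hν0 hν2 (measurable_Hf c).aestronglyMeasurable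
    (fun x hx => Hf_bound hc le_rfl le_rfl hx)

lemma integrable_pow_exp (hν0 : ν (Set.Iic 0) = 0)
    (hν2 : (∫⁻ x, ENNReal.ofReal (min 1 (x ^ 2)) ∂ν) < ⊤) {k : ℕ} (hk : 2 ≤ k) {c : ℝ}
    (hc : 0 < c) : Integrable (fun x => x ^ k * Real.exp (-(c * x))) ν := by
  apply integrable_of_le_min hν0 hν2 (by fun_prop : Measurable
    fun x : ℝ => x ^ k * Real.exp (-(c * x))).aestronglyMeasurable
  intro x hx
  rw [Real.norm_eq_abs, abs_of_nonneg (by positivity)]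
  exact pow_exp_bound hk hc hx

lemma hasDerivAt_expneg (x c : ℝ) :
    HasDerivAt (fun c : ℝ => Real.exp (-(c * x))) (-x * Real.exp (-(c * x))) c := by
  have h := (((hasDerivAt_id c).mul_const x).neg).exp
  refine h.congr_deriv ?_
  simp only [id_eq, Pi.neg_apply]
  ring

lemma hasDerivAt_Kf (x c : ℝ) : HasDerivAt (fun c => Kf c x) (Hf c x) c := by
  unfold Kf Hf
  have h1 := hasDerivAt_expneg x c
  by_cases hx1 : x < 1
  · simp only [if_pos hx1]
    have h2 : HasDerivAt (fun c : ℝ => c * x) x c := by simpa using (hasDerivAt_id c).mul_const x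
    refine ((h1.sub_const 1).add h2).congr_deriv ?_; ring
  · simp only [if_neg hx1]
    refine ((h1.sub_const 1).add_const 0).congr_deriv ?_; ring

lemma hasDerivAt_Hf (x c : ℝ) :
    HasDerivAt (fun c => Hf c x) (x ^ 2 * Real.exp (-(c * x))) c := by
  unfold Hf
  have h1 := (hasDerivAt_expneg x c).const_mul x
  refine (HasDerivAt.const_sub (if x < 1 then x else 0) h1).congr_deriv ?_; ring

lemma hasDerivAt_pow_exp (k : ℕ) (x c : ℝ) :
    HasDerivAt (fun c => x ^ k * Real.exp (-(c * x)))
      (-(x ^ (k + 1) * Real.exp (-(c * x)))) c := by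
  have h1 := (hasDerivAt_expneg x c).const_mul (x ^ k)
  refine h1.congr_deriv ?_; rw [pow_succ]; ring

lemma hasDerivAt_intK (hν0 : ν (Set.Iic 0) = 0)
    (hν2 : (∫⁻ x, ENNReal.ofReal (min 1 (x ^ 2)) ∂ν) < ⊤) {c : ℝ} (hc : 0 < c) :
    HasDerivAt (fun c => ∫ x, Kf c x ∂ν) (∫ x, Hf c x ∂ν) c := by
  refine (hasDerivAt_integral_of_dominated_loc_of_deriv_le (s := Metric.ball c (c / 2)) (Metric.ball_mem_nhds c (by positivity))
    (Filter.Eventually.of_forall fun c' => (measurable_Kf c').aestronglyMeasurable)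
    (integrable_Kf hν0 hν2 hc.le)
    (measurable_Hf c).aestronglyMeasurable
    (bound := fun x => max (3 * c / 2) (1 / (c / 2)) * min 1 (x ^ 2))
    ?_ ((integrable_min hν2).const_mul _) ?_).2
  · filter_upwards [ae_pos hν0] with x hx c' hc'
    obtain ⟨h1, h2⟩ := mem_ball_half hc'
    exact Hf_bound (by positivity) h1 h2 hx
  · exact Filter.Eventually.of_forall fun x c' _ => hasDerivAt_Kf x c'

lemma hasDerivAt_intH (hν0 : ν (Set.Iic 0) = 0)
    (hν2 : (∫⁻ x, ENNReal.ofReal (min 1 (x ^ 2)) ∂ν) < ⊤) {c : ℝ} (hc : 0 < c) :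
    HasDerivAt (fun c => ∫ x, Hf c x ∂ν)
      (∫ x, x ^ 2 * Real.exp (-(c * x)) ∂ν) c := by
  refine (hasDerivAt_integral_of_dominated_loc_of_deriv_le (s := Metric.ball c (c / 2)) (Metric.ball_mem_nhds c (by positivity))
    (Filter.Eventually.of_forall fun c' => (measurable_Hf c').aestronglyMeasurable)
    (integrable_Hf hν0 hν2 hc)
    (F' := fun c x => x ^ 2 * Real.exp (-(c * x)))
    (by fun_prop : Measurable fun x : ℝ => x ^ 2 * Real.exp (-(c * x))).aestronglyMeasurable
    (bound := fun x => max 1 ((Nat.factorial 2 : ℝ) / (c / 2) ^ 2) * min 1 (x ^ 2))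
    ?_ ((integrable_min hν2).const_mul _) ?_).2
  · filter_upwards [ae_pos hν0] with x hx c' hc'
    obtain ⟨h1, _⟩ := mem_ball_half hc'
    rw [Real.norm_eq_abs, abs_of_nonneg (by positivity)]
    calc x ^ 2 * Real.exp (-(c' * x))
        ≤ x ^ 2 * Real.exp (-(c / 2 * x)) := by
          have := exp_neg_mono (x := x) h1 hx.le
          nlinarith [sq_nonneg x]
      _ ≤ max 1 ((Nat.factorial 2 : ℝ) / (c / 2) ^ 2) * min 1 (x ^ 2) :=
          pow_exp_bound le_rfl (by positivity) hx
  · exact Filter.Eventually.of_forall fun x c' _ => hasDerivAt_Hf x c'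

lemma hasDerivAt_intPow (hν0 : ν (Set.Iic 0) = 0)
    (hν2 : (∫⁻ x, ENNReal.ofReal (min 1 (x ^ 2)) ∂ν) < ⊤) {k : ℕ} (hk : 2 ≤ k) {c : ℝ}
    (hc : 0 < c) :
    HasDerivAt (fun c => ∫ x, x ^ k * Real.exp (-(c * x)) ∂ν)
      (-∫ x, x ^ (k + 1) * Real.exp (-(c * x)) ∂ν) c := by
  rw [← integral_neg]
  refine (hasDerivAt_integral_of_dominated_loc_of_deriv_le (s := Metric.ball c (c / 2)) (Metric.ball_mem_nhds c (by positivity))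
    (Filter.Eventually.of_forall fun c' => (by fun_prop : Measurable
      fun x : ℝ => x ^ k * Real.exp (-(c' * x))).aestronglyMeasurable)
    (integrable_pow_exp hν0 hν2 hk hc)
    (F' := fun c x => -(x ^ (k + 1) * Real.exp (-(c * x))))
    ((by fun_prop : Measurable fun x : ℝ =>
      -(x ^ (k + 1) * Real.exp (-(c * x)))).aestronglyMeasurable)
    (bound := fun x => max 1 (((k + 1).factorial : ℝ) / (c / 2) ^ (k + 1)) * min 1 (x ^ 2))
    ?_ ((integrable_min hν2).const_mul _) ?_).2
  · filter_upwards [ae_pos hν0] with x hx c' hc'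
    obtain ⟨h1, _⟩ := mem_ball_half hc'
    rw [norm_neg, Real.norm_eq_abs, abs_of_nonneg (by positivity)]
    calc x ^ (k + 1) * Real.exp (-(c' * x))
        ≤ x ^ (k + 1) * Real.exp (-(c / 2 * x)) := by
          have := exp_neg_mono (x := x) h1 hx.le
          nlinarith [pow_pos hx (k + 1)]
      _ ≤ max 1 (((k + 1).factorial : ℝ) / (c / 2) ^ (k + 1)) * min 1 (x ^ 2) :=
          pow_exp_bound (by omega) (by positivity) hx
  · exact Filter.Eventually.of_forall fun x c' _ => hasDerivAt_pow_exp k x c'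

/-- the `n`-th derivative of `ψ` on `(0,∞)` -/
noncomputable def Dn (α β : ℝ) (ν : Measure ℝ) : ℕ → ℝ → ℝ
  | 0 => fun c => α * c + β * c ^ 2 + ∫ x, Kf c x ∂ν
  | 1 => fun c => α + 2 * β * c + ∫ x, Hf c x ∂ν
  | (n + 2) => fun c => (if n = 0 then 2 * β else 0)
      + (-1 : ℝ) ^ n * ∫ x, x ^ (n + 2) * Real.exp (-(c * x)) ∂ν

lemma hasDerivAt_Dn (hν0 : ν (Set.Iic 0) = 0)
    (hν2 : (∫⁻ x, ENNReal.ofReal (min 1 (x ^ 2)) ∂ν) < ⊤) (α β : ℝ) :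
    ∀ n : ℕ, ∀ c : ℝ, 0 < c → HasDerivAt (Dn α β ν n) (Dn α β ν (n + 1) c) c := by
  intro n c hc
  match n with
  | 0 =>
    have h1 : HasDerivAt (fun c : ℝ => α * c) α c := by
      simpa using (hasDerivAt_id c).const_mul α
    have h2 : HasDerivAt (fun c : ℝ => β * c ^ 2) (2 * β * c) c := by
      have := ((hasDerivAt_pow 2 c)).const_mul β
      refine this.congr_deriv ?_; ring
    have h3 := hasDerivAt_intK hν0 hν2 hc
    exact (h1.add h2).add h3
  | 1 =>
    have h1 : HasDerivAt (fun c : ℝ => α + 2 * β * c) (2 * β) c := by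
      refine ((hasDerivAt_const c α).add (((hasDerivAt_id c)).const_mul (2 * β))).congr_deriv ?_; simp
    have h3 := hasDerivAt_intH hν0 hν2 hc
    have := h1.add h3
    refine this.congr_deriv ?_
    simp [Dn]
  | (n + 2) =>
    have h3 := (hasDerivAt_intPow hν0 hν2 (by omega : 2 ≤ n + 2) hc).const_mul ((-1 : ℝ) ^ n)
    have := h3.const_add (if n = 0 then 2 * β else 0)
    refine this.congr_deriv ?_
    simp only [Dn, Nat.add_eq, if_neg (Nat.succ_ne_zero n)]
    rw [pow_succ]
    ring

lemma iteratedDerivWithin_eq_Dn {ψ : ℝ → ℝ} {α β : ℝ} (h : IsBMWith ψ α β ν) :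
    ∀ n : ℕ, ∀ c : ℝ, 0 < c → iteratedDerivWithin n ψ (Set.Ioi 0) c = Dn α β ν n c := by
  obtain ⟨hβ, hν0, hν2, hψ⟩ := h
  intro n
  induction n with
  | zero =>
    intro c hc
    rw [iteratedDerivWithin_zero]
    rw [hψ c hc.le]; rfl
  | succ n ih =>
    intro c hc
    have hmem : c ∈ Set.Ioi (0 : ℝ) := Set.mem_Ioi.mpr hc
    rw [iteratedDerivWithin_succ,
      derivWithin_of_isOpen isOpen_Ioi hmem]
    have heq : iteratedDerivWithin n ψ (Set.Ioi 0) =ᶠ[nhds c] Dn α β ν n := by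
      filter_upwards [isOpen_Ioi.mem_nhds hmem] with y hy
      exact ih y (Set.mem_Ioi.mp hy)
    rw [heq.deriv_eq]
    exact (hasDerivAt_Dn hν0 hν2 α β n c hc).deriv

lemma derivWithin_eq_Dn {ψ : ℝ → ℝ} {α β : ℝ} (h : IsBMWith ψ α β ν) {c : ℝ} (hc : 0 < c) :
    derivWithin ψ (Set.Ioi 0) c = Dn α β ν 1 c := by
  have := iteratedDerivWithin_eq_Dn h 1 c hc
  rwa [iteratedDerivWithin_one] at this

lemma tonelli_aux (hν0 : ν (Set.Iic 0) = 0)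
    (hν2 : (∫⁻ x, ENNReal.ofReal (min 1 (x ^ 2)) ∂ν) < ⊤) {f : ℕ → ℝ → ℝ} {g : ℝ → ℝ} {C : ℝ}
    (hmeas : ∀ k, AEStronglyMeasurable (f k) ν)
    (hnonneg : ∀ k x, 0 < x → 0 ≤ f k x)
    (hsum : ∀ x, 0 < x → HasSum (fun k => f k x) (g x))
    (hbound : ∀ x, 0 < x → g x ≤ C * min 1 (x ^ 2)) (hC : 0 ≤ C) :
    Summable (fun k => ∫ x, f k x ∂ν) ∧ (∑' k, ∫ x, f k x ∂ν) = ∫ x, g x ∂ν := by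
  have hae := ae_pos hν0
  have hfin : ∑' k, ∫⁻ x, ‖f k x‖ₑ ∂ν ≠ ⊤ := by
    rw [← lintegral_tsum (fun k => (hmeas k).enorm)]
    have hle : ∫⁻ x, ∑' k, (‖f k x‖ₑ : ENNReal) ∂ν
        ≤ ∫⁻ x, ENNReal.ofReal C * ENNReal.ofReal (min 1 (x ^ 2)) ∂ν := by
      refine lintegral_mono_ae (hae.mono fun x hx => ?_)
      have hs : Summable (fun k => f k x) := (hsum x hx).summable
      calc ∑' k, (‖f k x‖ₑ : ENNReal) = ∑' k, ENNReal.ofReal (f k x) :=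
            tsum_congr fun k => Real.enorm_eq_ofReal (hnonneg k x hx)
        _ = ENNReal.ofReal (∑' k, f k x) :=
            (ENNReal.ofReal_tsum_of_nonneg (fun k => hnonneg k x hx) hs).symm
        _ = ENNReal.ofReal (g x) := by rw [(hsum x hx).tsum_eq]
        _ ≤ ENNReal.ofReal (C * min 1 (x ^ 2)) := ENNReal.ofReal_le_ofReal (hbound x hx)
        _ = ENNReal.ofReal C * ENNReal.ofReal (min 1 (x ^ 2)) := ENNReal.ofReal_mul hC
    have hfin2 : ∫⁻ x, ENNReal.ofReal C * ENNReal.ofReal (min 1 (x ^ 2)) ∂ν < ⊤ := by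
      rw [lintegral_const_mul' _ _ ENNReal.ofReal_ne_top]
      exact ENNReal.mul_lt_top ENNReal.ofReal_lt_top hν2
    exact (hle.trans_lt hfin2).ne
  have hiteq : ∫ x, (∑' k, f k x) ∂ν = ∑' k, ∫ x, f k x ∂ν := integral_tsum hmeas hfin
  have hgeq : ∫ x, (∑' k, f k x) ∂ν = ∫ x, g x ∂ν :=
    integral_congr_ae (hae.mono fun x hx => (hsum x hx).tsum_eq)
  constructor
  · have h1 : ∀ k, ∫ x, f k x ∂ν = (∫⁻ x, ‖f k x‖ₑ ∂ν).toReal := by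
      intro k
      rw [integral_eq_lintegral_of_nonneg_ae (hae.mono fun x hx => hnonneg k x hx) (hmeas k)]
      congr 1
      refine lintegral_congr_ae (hae.mono fun x hx => ?_)
      exact (Real.enorm_eq_ofReal (hnonneg k x hx)).symm
    exact (ENNReal.summable_toReal hfin).congr fun k => (h1 k).symm
  · rw [← hiteq, hgeq]

lemma x_exp_le {b x : ℝ} (hb : 0 < b) (hx : 0 ≤ x) : x * Real.exp (-(b * x)) ≤ 1 / b := by
  have hbx : 0 ≤ b * x := by positivity
  have h2 : b * x + 1 ≤ Real.exp (b * x) := Real.add_one_le_exp _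
  have hee : Real.exp (b * x) * Real.exp (-(b * x)) = 1 := by rw [← Real.exp_add]; simp
  rw [le_div_iff₀ hb]
  nlinarith [Real.exp_pos (-(b * x)),
    mul_le_mul_of_nonneg_right h2 (Real.exp_pos (-(b * x))).le]

lemma pgf_bound {q t x : ℝ} (ht : 0 ≤ t) (htq : t ≤ q) (hx : 0 < x) :
    Real.exp (-(q * x)) * (Real.exp (t * x) - 1 - t * x) ≤ max 1 (t ^ 2) * min 1 (x ^ 2) := by
  have htx : 0 ≤ t * x := by positivity
  have hle : Real.exp (t * x) * Real.exp (-(q * x)) ≤ 1 := by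
    rw [← Real.exp_add]
    exact Real.exp_le_one_iff.mpr (by nlinarith)
  have hnn : 0 ≤ Real.exp (t * x) - 1 - t * x := by nlinarith [Real.add_one_le_exp (t * x)]
  have hep : 0 < Real.exp (-(q * x)) := Real.exp_pos _
  rcases lt_or_ge x 1 with h | h
  · have h2 := exp_sub_le htx
    have hmin : min 1 (x ^ 2) = x ^ 2 := min_eq_right (by nlinarith)
    rw [hmin]
    calc Real.exp (-(q * x)) * (Real.exp (t * x) - 1 - t * x)
        ≤ Real.exp (-(q * x)) * ((t * x) ^ 2 * Real.exp (t * x)) := by nlinarith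
      _ = t ^ 2 * x ^ 2 * (Real.exp (t * x) * Real.exp (-(q * x))) := by ring
      _ ≤ t ^ 2 * x ^ 2 * 1 := by nlinarith [sq_nonneg (t * x)]
      _ ≤ max 1 (t ^ 2) * x ^ 2 := by
          rw [mul_one]
          exact mul_le_mul_of_nonneg_right (le_max_right _ _) (sq_nonneg x)
  · have hmin : min 1 (x ^ 2) = 1 := min_eq_left (by nlinarith)
    rw [hmin, mul_one]
    calc Real.exp (-(q * x)) * (Real.exp (t * x) - 1 - t * x)
        ≤ Real.exp (-(q * x)) * Real.exp (t * x) := by nlinarith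
      _ ≤ 1 := by rw [mul_comm]; exact hle
      _ ≤ max 1 (t ^ 2) := le_max_left _ _

lemma mean_bound {q u x : ℝ} (hu : 0 ≤ u) (huq : u < q) (hx : 0 < x) :
    x * Real.exp (-(q * x)) * (Real.exp (u * x) - 1) ≤ max u (1 / (q - u)) * min 1 (x ^ 2) := by
  have hux : 0 ≤ u * x := by positivity
  have hnn : 0 ≤ Real.exp (u * x) - 1 := by nlinarith [Real.add_one_le_exp (u * x)]
  have hep : 0 < Real.exp (-(q * x)) := Real.exp_pos _
  have hepu : 0 < Real.exp (u * x) := Real.exp_pos _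
  rcases lt_or_ge x 1 with h | h
  · have h2 := exp_sub_one_le hux
    have hle : Real.exp (u * x) * Real.exp (-(q * x)) ≤ 1 := by
      rw [← Real.exp_add]
      exact Real.exp_le_one_iff.mpr (by nlinarith)
    have hmin : min 1 (x ^ 2) = x ^ 2 := min_eq_right (by nlinarith)
    rw [hmin]
    calc x * Real.exp (-(q * x)) * (Real.exp (u * x) - 1)
        ≤ x * Real.exp (-(q * x)) * (u * x * Real.exp (u * x)) := by
          nlinarith [mul_le_mul_of_nonneg_left h2 (mul_nonneg hx.le hep.le)]
      _ = u * x ^ 2 * (Real.exp (u * x) * Real.exp (-(q * x))) := by ring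
      _ ≤ u * x ^ 2 * 1 := by
          nlinarith [mul_le_mul_of_nonneg_left hle
            (by positivity : (0:ℝ) ≤ u * x ^ 2)]
      _ ≤ max u (1 / (q - u)) * x ^ 2 := by
          rw [mul_one]
          exact mul_le_mul_of_nonneg_right (le_max_left _ _) (sq_nonneg x)
  · have hmin : min 1 (x ^ 2) = 1 := min_eq_left (by nlinarith)
    rw [hmin, mul_one]
    have key : x * Real.exp (-(q * x)) * Real.exp (u * x) = x * Real.exp (-((q - u) * x)) := by
      rw [mul_assoc, ← Real.exp_add]; ring_nf
    calc x * Real.exp (-(q * x)) * (Real.exp (u * x) - 1)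
        ≤ x * Real.exp (-(q * x)) * Real.exp (u * x) := by nlinarith
      _ = x * Real.exp (-((q - u) * x)) := key
      _ ≤ 1 / (q - u) := x_exp_le (by linarith) hx.le
      _ ≤ max u (1 / (q - u)) := le_max_right _ _

lemma hasSum_pgf {q t : ℝ} (x : ℝ) :
    HasSum (fun k : ℕ => t ^ (k + 2) / ((k + 2).factorial : ℝ) *
        (x ^ (k + 2) * Real.exp (-(q * x))))
      (Real.exp (-(q * x)) * (Real.exp (t * x) - 1 - t * x)) := by
  set y := t * x with hy
  have hs : Summable (fun n : ℕ => y ^ n / n.factorial) := Real.summable_pow_div_factorial y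
  have hexp : (∑' n : ℕ, y ^ n / (n.factorial : ℝ)) = Real.exp y := by
    rw [Real.exp_eq_exp_ℝ, NormedSpace.exp_eq_tsum_div]
  have h2 : Summable (fun k : ℕ => y ^ (k + 2) / ((k + 2).factorial : ℝ)) :=
    (summable_nat_add_iff 2).mpr hs
  have h3 : (∑' k : ℕ, y ^ (k + 2) / ((k + 2).factorial : ℝ)) = Real.exp y - 1 - y := by
    have h4 := Summable.sum_add_tsum_nat_add 2 hs
    rw [hexp] at h4
    simp [Finset.sum_range_succ] at h4
    linarith
  have h5 : HasSum (fun k : ℕ => Real.exp (-(q * x)) * (y ^ (k + 2) / ((k + 2).factorial : ℝ)))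
      (Real.exp (-(q * x)) * (Real.exp y - 1 - y)) := by
    rw [← h3]
    exact h2.hasSum.mul_left _
  have key : ∀ k : ℕ, t ^ (k + 2) / ((k + 2).factorial : ℝ) * (x ^ (k + 2) * Real.exp (-(q * x)))
      = Real.exp (-(q * x)) * (y ^ (k + 2) / ((k + 2).factorial : ℝ)) := by
    intro k
    rw [hy, mul_pow]
    ring
  simpa only [key, hy] using h5

lemma hasSum_mean {q u : ℝ} (x : ℝ) :
    HasSum (fun k : ℕ => u ^ (k + 1) / ((k + 1).factorial : ℝ) *
        (x ^ (k + 2) * Real.exp (-(q * x))))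
      (x * Real.exp (-(q * x)) * (Real.exp (u * x) - 1)) := by
  set y := u * x with hy
  have hs : Summable (fun n : ℕ => y ^ n / n.factorial) := Real.summable_pow_div_factorial y
  have hexp : (∑' n : ℕ, y ^ n / (n.factorial : ℝ)) = Real.exp y := by
    rw [Real.exp_eq_exp_ℝ, NormedSpace.exp_eq_tsum_div]
  have h2 : Summable (fun k : ℕ => y ^ (k + 1) / ((k + 1).factorial : ℝ)) :=
    (summable_nat_add_iff 1).mpr hs
  have h3 : (∑' k : ℕ, y ^ (k + 1) / ((k + 1).factorial : ℝ)) = Real.exp y - 1 := by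
    have h4 := Summable.sum_add_tsum_nat_add 1 hs
    rw [hexp] at h4
    simp [Finset.sum_range_succ] at h4
    linarith
  have h5 : HasSum (fun k : ℕ => x * Real.exp (-(q * x)) * (y ^ (k + 1) / ((k + 1).factorial : ℝ)))
      (x * Real.exp (-(q * x)) * (Real.exp y - 1)) := by
    rw [← h3]
    exact h2.hasSum.mul_left _
  have key : ∀ k : ℕ, u ^ (k + 1) / ((k + 1).factorial : ℝ) * (x ^ (k + 2) * Real.exp (-(q * x)))
      = x * Real.exp (-(q * x)) * (y ^ (k + 1) / ((k + 1).factorial : ℝ)) := by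
    intro k
    rw [hy, mul_pow, pow_succ x (k + 1)]
    ring
  simpa only [key, hy] using h5

lemma series_pgf (hν0 : ν (Set.Iic 0) = 0)
    (hν2 : (∫⁻ x, ENNReal.ofReal (min 1 (x ^ 2)) ∂ν) < ⊤) {q t : ℝ}
    (ht : 0 ≤ t) (htq : t ≤ q) :
    Summable (fun k : ℕ => t ^ (k + 2) / ((k + 2).factorial : ℝ) *
      ∫ x, x ^ (k + 2) * Real.exp (-(q * x)) ∂ν) ∧
    (∑' k : ℕ, t ^ (k + 2) / ((k + 2).factorial : ℝ) *
      ∫ x, x ^ (k + 2) * Real.exp (-(q * x)) ∂ν)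
      = ∫ x, Real.exp (-(q * x)) * (Real.exp (t * x) - 1 - t * x) ∂ν := by
  have h := tonelli_aux hν0 hν2
    (f := fun k x => t ^ (k + 2) / ((k + 2).factorial : ℝ) * (x ^ (k + 2) * Real.exp (-(q * x))))
    (g := fun x => Real.exp (-(q * x)) * (Real.exp (t * x) - 1 - t * x))
    (C := max 1 (t ^ 2))
    (fun k => ((by fun_prop : Measurable fun x : ℝ =>
      t ^ (k + 2) / ((k + 2).factorial : ℝ) * (x ^ (k + 2) * Real.exp (-(q * x))))
      ).aestronglyMeasurable)
    (fun k x hx => by positivity)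
    (fun x hx => hasSum_pgf x)
    (fun x hx => pgf_bound ht htq hx)
    (le_max_of_le_left zero_le_one)
  simpa only [MeasureTheory.integral_const_mul] using h

lemma series_mean (hν0 : ν (Set.Iic 0) = 0)
    (hν2 : (∫⁻ x, ENNReal.ofReal (min 1 (x ^ 2)) ∂ν) < ⊤) {q u : ℝ}
    (hu : 0 ≤ u) (huq : u < q) :
    Summable (fun k : ℕ => u ^ (k + 1) / ((k + 1).factorial : ℝ) *
      ∫ x, x ^ (k + 2) * Real.exp (-(q * x)) ∂ν) ∧
    (∑' k : ℕ, u ^ (k + 1) / ((k + 1).factorial : ℝ) *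
      ∫ x, x ^ (k + 2) * Real.exp (-(q * x)) ∂ν)
      = ∫ x, x * Real.exp (-(q * x)) * (Real.exp (u * x) - 1) ∂ν := by
  have h := tonelli_aux hν0 hν2
    (f := fun k x => u ^ (k + 1) / ((k + 1).factorial : ℝ) * (x ^ (k + 2) * Real.exp (-(q * x))))
    (g := fun x => x * Real.exp (-(q * x)) * (Real.exp (u * x) - 1))
    (C := max u (1 / (q - u)))
    (fun k => ((by fun_prop : Measurable fun x : ℝ =>
      u ^ (k + 1) / ((k + 1).factorial : ℝ) * (x ^ (k + 2) * Real.exp (-(q * x))))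
      ).aestronglyMeasurable)
    (fun k x hx => by positivity)
    (fun x hx => hasSum_mean x)
    (fun x hx => mean_bound hu huq hx)
    (le_max_of_le_right (one_div_nonneg.mpr (by linarith)))
  simpa only [MeasureTheory.integral_const_mul] using h

lemma Kf_zero (x : ℝ) : Kf 0 x = 0 := by unfold Kf; simp

lemma Kf_taylor (q t x : ℝ) :
    Kf (q - t) x - Kf q x + t * Hf q x
      = Real.exp (-(q * x)) * (Real.exp (t * x) - 1 - t * x) := by
  unfold Kf Hf
  have he : Real.exp (-((q - t) * x)) = Real.exp (-(q * x)) * Real.exp (t * x) := by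
    rw [← Real.exp_add]; ring_nf
  by_cases hx1 : x < 1
  · simp only [if_pos hx1]; rw [he]; ring
  · simp only [if_neg hx1]; rw [he]; ring

lemma Hf_diff (p q x : ℝ) :
    Hf q x - Hf p x = x * Real.exp (-(q * x)) * (Real.exp ((q - p) * x) - 1) := by
  unfold Hf
  have he : Real.exp (-(p * x)) = Real.exp (-(q * x)) * Real.exp ((q - p) * x) := by
    rw [← Real.exp_add]; ring_nf
  by_cases hx1 : x < 1
  · simp only [if_pos hx1]; rw [he]; ring
  · simp only [if_neg hx1]; rw [he]; ring

lemma taylor_int (hν0 : ν (Set.Iic 0) = 0)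
    (hν2 : (∫⁻ x, ENNReal.ofReal (min 1 (x ^ 2)) ∂ν) < ⊤) {q t : ℝ} (hq : 0 < q)
    (hqt : 0 ≤ q - t) :
    (∫ x, Kf (q - t) x ∂ν) - (∫ x, Kf q x ∂ν) + t * ∫ x, Hf q x ∂ν
      = ∫ x, Real.exp (-(q * x)) * (Real.exp (t * x) - 1 - t * x) ∂ν := by
  have hA := integrable_Kf hν0 hν2 hqt
  have hB := integrable_Kf hν0 hν2 hq.le
  have hC := integrable_Hf hν0 hν2 hq
  have hAB : Integrable (fun x => Kf (q - t) x - Kf q x) ν := hA.sub hB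
  calc (∫ x, Kf (q - t) x ∂ν) - (∫ x, Kf q x ∂ν) + t * ∫ x, Hf q x ∂ν
      = ∫ x, (Kf (q - t) x - Kf q x + t * Hf q x) ∂ν := by
        rw [integral_add hAB (hC.const_mul t), integral_sub hA hB,
          MeasureTheory.integral_const_mul]
    _ = ∫ x, Real.exp (-(q * x)) * (Real.exp (t * x) - 1 - t * x) ∂ν :=
        integral_congr_ae (Filter.Eventually.of_forall fun x => Kf_taylor q t x)

lemma mean_int (hν0 : ν (Set.Iic 0) = 0)
    (hν2 : (∫⁻ x, ENNReal.ofReal (min 1 (x ^ 2)) ∂ν) < ⊤) {p q : ℝ} (hp : 0 < p)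
    (hpq : p < q) :
    (∫ x, Hf q x ∂ν) - (∫ x, Hf p x ∂ν)
      = ∫ x, x * Real.exp (-(q * x)) * (Real.exp ((q - p) * x) - 1) ∂ν := by
  rw [← integral_sub (integrable_Hf hν0 hν2 (hp.trans hpq)) (integrable_Hf hν0 hν2 hp)]
  exact integral_congr_ae (Filter.Eventually.of_forall fun x => Hf_diff p q x)

lemma int_Kf_zero : ∫ x, Kf 0 x ∂ν = 0 := by
  simp only [Kf_zero, integral_zero]

lemma Dn_zero_zero (α β : ℝ) : Dn α β ν 0 0 = 0 := by
  simp only [Dn, int_Kf_zero]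
  ring

lemma deriv_lower (hν0 : ν (Set.Iic 0) = 0)
    (hν2 : (∫⁻ x, ENNReal.ofReal (min 1 (x ^ 2)) ∂ν) < ⊤) {α β : ℝ} (hβ : 0 ≤ β)
    {a b : ℝ} (ha : 0 ≤ a) (hab : a < b) :
    Dn α β ν 0 b - Dn α β ν 0 a ≤ (b - a) * Dn α β ν 1 b := by
  have hb : 0 < b := lt_of_le_of_lt ha hab
  have ht := taylor_int hν0 hν2 (t := b - a) hb (by linarith)
  have hba : b - (b - a) = a := by ring
  rw [hba] at ht
  have hR : 0 ≤ ∫ x, Real.exp (-(b * x)) * (Real.exp ((b - a) * x) - 1 - (b - a) * x) ∂ν :=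
    integral_nonneg fun x => mul_nonneg (Real.exp_pos _).le
      (by nlinarith [Real.add_one_le_exp ((b - a) * x)])
  simp only [Dn]
  nlinarith [mul_nonneg hβ (sq_nonneg (b - a))]

end BMProof

end BMAux

open BMProof in
/-- For a branching mechanism `ψ` and `0 ≤ p < q` with `0 ≤ μ = ψ(p) < λ = ψ(q)`: `ψ'(q) > 0`,
the family `ξ_{μ,λ}` is a probability distribution on `ℕ` with generating function
`φ_{μ,λ}(s) = s + (ψ(q - s(q-p)) - μ)/((q-p)ψ'(q))` on `[0,1]`; moreover, if `p > 0` then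
`φ'_{μ,λ}(1) = 1 - ψ'(p)/ψ'(q) ≤ 1`, with strict inequality whenever `ψ'(p) > 0`. -/
theorem xiML_prob_and_pgf (ψ : ℝ → ℝ) (hψ : IsBranchingMechanism ψ)
    (p q : ℝ) (hp : 0 ≤ p) (hpq : p < q) (hμ : 0 ≤ ψ p) (hml : ψ p < ψ q) :
    0 < derivWithin ψ (Set.Ioi 0) q ∧
    (∀ k : ℕ, 0 ≤ xiML ψ p q k) ∧
    Summable (xiML ψ p q) ∧ (∑' k : ℕ, xiML ψ p q k) = 1 ∧
    (∀ s ∈ Set.Icc (0 : ℝ) 1,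
      (∑' k : ℕ, xiML ψ p q k * s ^ k)
        = s + (ψ (q - s * (q - p)) - ψ p) / ((q - p) * derivWithin ψ (Set.Ioi 0) q)) ∧
    (0 < p →
      Summable (fun k : ℕ => (k : ℝ) * xiML ψ p q k) ∧
      (∑' k : ℕ, (k : ℝ) * xiML ψ p q k)
        = 1 - derivWithin ψ (Set.Ioi 0) p / derivWithin ψ (Set.Ioi 0) q ∧
      (∑' k : ℕ, (k : ℝ) * xiML ψ p q k) ≤ 1 ∧
      (0 < derivWithin ψ (Set.Ioi 0) p → (∑' k : ℕ, (k : ℝ) * xiML ψ p q k) < 1)) := by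
  obtain ⟨α, β, ν, hBM⟩ := hψ
  obtain ⟨hβ, hν0, hν2, hfor⟩ := id hBM
  have hq : 0 < q := lt_of_le_of_lt hp hpq
  have hqp : 0 < q - p := by linarith
  have hqpne : q - p ≠ 0 := ne_of_gt hqp
  have hDq : derivWithin ψ (Set.Ioi 0) q = Dn α β ν 1 q := derivWithin_eq_Dn hBM hq
  have hψq : ψ q = Dn α β ν 0 q := by rw [hfor q hq.le]; rfl
  have hψp : ψ p = Dn α β ν 0 p := by rw [hfor p hp]; rfl
  have hlow : ψ q - ψ p ≤ (q - p) * Dn α β ν 1 q := by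
    have h := deriv_lower hν0 hν2 hβ hp hpq (α := α)
    rw [hψq, hψp]; linarith
  have hM : 0 < Dn α β ν 1 q := by
    by_contra h
    push_neg at h
    nlinarith
  have hMne : Dn α β ν 1 q ≠ 0 := ne_of_gt hM
  have hI : ∀ k : ℕ, 0 ≤ ∫ x, x ^ k * Real.exp (-(q * x)) ∂ν := fun k =>
    integral_nonneg_of_ae ((ae_pos hν0).mono fun x hx => by positivity)
  -- explicit formula for xiML (k+2)
  have hxi2 : ∀ k : ℕ, xiML ψ p q (k + 2)
      = ((if k = 0 then 2 * β else 0) + ∫ x, x ^ (k + 2) * Real.exp (-(q * x)) ∂ν)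
        * (q - p) ^ (k + 1) / (((k + 2).factorial : ℝ) * Dn α β ν 1 q) := by
    intro k
    have hD := iteratedDerivWithin_eq_Dn hBM (k + 2) q hq
    have habs : |Dn α β ν (k + 2) q|
        = (if k = 0 then 2 * β else 0) + ∫ x, x ^ (k + 2) * Real.exp (-(q * x)) ∂ν := by
      simp only [Dn]
      rcases Nat.eq_zero_or_pos k with hk | hk
      · subst hk
        have h2 : (0:ℝ) ≤ 2 * β + ∫ x, x ^ (0 + 2) * Real.exp (-(q * x)) ∂ν := by
          linarith [hI (0 + 2)]
        simp only [eq_self_iff_true, if_true, pow_zero, one_mul]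
        exact abs_of_nonneg h2
      · have hk0 : k ≠ 0 := hk.ne'
        simp only [if_neg hk0, zero_add]
        rw [abs_mul, abs_pow, abs_neg, abs_one, one_pow, one_mul, abs_of_nonneg (hI (k + 2))]
    show |iteratedDerivWithin (k + 2) ψ (Set.Ioi 0) q| * (q - p) ^ (k + 1) /
        (((k + 2).factorial : ℝ) * derivWithin ψ (Set.Ioi 0) q) = _
    rw [hD, habs, hDq]
  have hxi0 : xiML ψ p q 0 = (ψ q - ψ p) / ((q - p) * Dn α β ν 1 q) := by
    show (ψ q - ψ p) / ((q - p) * derivWithin ψ (Set.Ioi 0) q) = _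
    rw [hDq]
  have hxi1 : xiML ψ p q 1 = 0 := rfl
  have hxinn : ∀ k : ℕ, 0 ≤ xiML ψ p q k := by
    intro k
    match k with
    | 0 =>
      rw [hxi0]
      exact div_nonneg (by linarith) (by positivity)
    | 1 => rw [hxi1]
    | (k + 2) =>
      rw [hxi2 k]
      have h1 : 0 ≤ (if k = 0 then 2 * β else 0) := by
        split
        · linarith
        · exact le_refl 0
      exact div_nonneg (mul_nonneg (add_nonneg h1 (hI (k + 2))) (pow_nonneg hqp.le _))
        (mul_nonneg (Nat.cast_nonneg _) hM.le)
  -- the key pgf computation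
  have key : ∀ s : ℝ, 0 ≤ s → s ≤ 1 →
      Summable (fun k : ℕ => xiML ψ p q k * s ^ k) ∧
      (∑' k : ℕ, xiML ψ p q k * s ^ k)
        = s + (ψ (q - s * (q - p)) - ψ p) / ((q - p) * Dn α β ν 1 q) := by
    intro s hs0 hs1
    set t := s * (q - p) with htdef
    have ht0 : 0 ≤ t := mul_nonneg hs0 hqp.le
    have htq : t ≤ q := by rw [htdef]; nlinarith
    have hqt : 0 ≤ q - t := by rw [htdef]; nlinarith
    obtain ⟨hSsum, hSeq⟩ := series_pgf hν0 hν2 (q := q) ht0 htq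
    have hterm : ∀ k : ℕ, xiML ψ p q (k + 2) * s ^ (k + 2)
        = (1 / ((q - p) * Dn α β ν 1 q)) * (t ^ (k + 2) / ((k + 2).factorial : ℝ) *
            ∫ x, x ^ (k + 2) * Real.exp (-(q * x)) ∂ν)
          + (if k = 0 then β * t ^ 2 / ((q - p) * Dn α β ν 1 q) else 0) := by
      intro k
      rw [hxi2 k, htdef]
      rcases eq_or_ne k 0 with hk | hk
      · subst hk
        have hfac : (((0 + 2 : ℕ)).factorial : ℝ) = 2 := by norm_num [Nat.factorial]
        simp only [if_pos rfl, hfac, if_true]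
        generalize (∫ x, x ^ (0 + 2) * Real.exp (-(q * x)) ∂ν) = I
        field_simp
        ring
      · have hfne : (((k + 2).factorial : ℕ) : ℝ) ≠ 0 :=
          Nat.cast_ne_zero.mpr (Nat.factorial_ne_zero _)
        simp only [if_neg hk, add_zero, zero_add]
        have hpow : (q - p) ^ (k + 2) = (q - p) ^ (k + 1) * (q - p) := by
          rw [show k + 2 = (k + 1) + 1 from rfl, pow_succ]
        rw [mul_pow, hpow]
        field_simp
    have hsum2 : Summable (fun k : ℕ => xiML ψ p q (k + 2) * s ^ (k + 2)) :=
      ((hSsum.mul_left _).add (hasSum_ite_eq 0 _).summable).congr fun k => (hterm k).symm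
    have hsumF : Summable (fun k : ℕ => xiML ψ p q k * s ^ k) :=
      (summable_nat_add_iff 2).mp hsum2
    refine ⟨hsumF, ?_⟩
    have h01 : ∑ i ∈ Finset.range 2, xiML ψ p q i * s ^ i = xiML ψ p q 0 := by
      rw [Finset.sum_range_succ, Finset.sum_range_one, hxi1]
      simp
    have hsplit := Summable.sum_add_tsum_nat_add 2 hsumF
    rw [h01] at hsplit
    have htail : (∑' k : ℕ, xiML ψ p q (k + 2) * s ^ (k + 2))
        = (1 / ((q - p) * Dn α β ν 1 q)) *
            (∫ x, Real.exp (-(q * x)) * (Real.exp (t * x) - 1 - t * x) ∂ν)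
          + β * t ^ 2 / ((q - p) * Dn α β ν 1 q) := by
      calc (∑' k : ℕ, xiML ψ p q (k + 2) * s ^ (k + 2))
          = ∑' k : ℕ, ((1 / ((q - p) * Dn α β ν 1 q)) * (t ^ (k + 2) / ((k + 2).factorial : ℝ) *
              ∫ x, x ^ (k + 2) * Real.exp (-(q * x)) ∂ν)
            + (if k = 0 then β * t ^ 2 / ((q - p) * Dn α β ν 1 q) else 0)) :=
            tsum_congr hterm
        _ = (∑' k : ℕ, (1 / ((q - p) * Dn α β ν 1 q)) * (t ^ (k + 2) / ((k + 2).factorial : ℝ) *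
              ∫ x, x ^ (k + 2) * Real.exp (-(q * x)) ∂ν))
            + ∑' k : ℕ, (if k = 0 then β * t ^ 2 / ((q - p) * Dn α β ν 1 q) else 0) :=
            Summable.tsum_add (hSsum.mul_left _) (hasSum_ite_eq 0 _).summable
        _ = (1 / ((q - p) * Dn α β ν 1 q)) *
              (∫ x, Real.exp (-(q * x)) * (Real.exp (t * x) - 1 - t * x) ∂ν)
            + β * t ^ 2 / ((q - p) * Dn α β ν 1 q) := by
            rw [tsum_mul_left, hSeq, (hasSum_ite_eq 0 _).tsum_eq]
    have hψqt : ψ (q - t) = Dn α β ν 0 (q - t) := by rw [hfor _ hqt]; rfl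
    have htay := taylor_int hν0 hν2 (t := t) hq hqt
    have hfin : ψ (q - t) - ψ p = (ψ q - ψ p) - t * Dn α β ν 1 q + β * t ^ 2
        + ∫ x, Real.exp (-(q * x)) * (Real.exp (t * x) - 1 - t * x) ∂ν := by
      rw [hψqt, hψq, hψp]
      simp only [Dn]
      linear_combination htay
    rw [← hsplit, htail, hxi0, hfin, htdef]
    generalize (∫ x, Real.exp (-(q * x)) * (Real.exp (s * (q - p) * x) - 1 - s * (q - p) * x) ∂ν) = I
    field_simp
    ring
  refine ⟨?_, hxinn, ?_, ?_, ?_, ?_⟩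
  · rw [hDq]; exact hM
  · have h1 := (key 1 zero_le_one le_rfl).1
    simpa using h1
  · have h2 := (key 1 zero_le_one le_rfl).2
    simpa [sub_sub_cancel] using h2
  · intro s hs
    rw [hDq]
    exact (key s hs.1 hs.2).2
  · intro hp'
    have hDp : derivWithin ψ (Set.Ioi 0) p = Dn α β ν 1 p := derivWithin_eq_Dn hBM hp'
    obtain ⟨hS', hS'eq⟩ := series_mean hν0 hν2 (q := q) (u := q - p) hqp.le (by linarith)
    have hMI := mean_int hν0 hν2 hp' hpq
    have hD1 : Dn α β ν 1 q - Dn α β ν 1 p = 2 * β * (q - p)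
        + ∫ x, x * Real.exp (-(q * x)) * (Real.exp ((q - p) * x) - 1) ∂ν := by
      simp only [Dn]
      linarith [hMI]
    have hGterm : ∀ k : ℕ, ((k + 2 : ℕ) : ℝ) * xiML ψ p q (k + 2)
        = (1 / Dn α β ν 1 q) * ((q - p) ^ (k + 1) / ((k + 1).factorial : ℝ) *
            ∫ x, x ^ (k + 2) * Real.exp (-(q * x)) ∂ν)
          + (if k = 0 then 2 * β * (q - p) / Dn α β ν 1 q else 0) := by
      intro k
      rw [hxi2 k]
      have hfacs : (((k + 2).factorial : ℕ) : ℝ)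
          = ((k + 2 : ℕ) : ℝ) * (((k + 1).factorial : ℕ) : ℝ) := by
        rw [Nat.factorial_succ]
        push_cast
        ring
      have hfne : (((k + 1).factorial : ℕ) : ℝ) ≠ 0 :=
        Nat.cast_ne_zero.mpr (Nat.factorial_ne_zero _)
      rcases eq_or_ne k 0 with hk | hk
      · subst hk
        have hfac2 : (((0 + 2 : ℕ)).factorial : ℝ) = 2 := by norm_num [Nat.factorial]
        have hfac1 : (((0 + 1 : ℕ)).factorial : ℝ) = 1 := by norm_num [Nat.factorial]
        simp only [if_pos rfl, hfac2, hfac1]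
        push_cast
        generalize (∫ x, x ^ 2 * Real.exp (-(q * x)) ∂ν) = I
        field_simp
        ring
      · simp only [if_neg hk, add_zero, zero_add]
        rw [hfacs]
        push_cast
        field_simp
    have hG2 : Summable (fun k : ℕ => ((k + 2 : ℕ) : ℝ) * xiML ψ p q (k + 2)) :=
      ((hS'.mul_left _).add (hasSum_ite_eq 0 _).summable).congr fun k => (hGterm k).symm
    have hGsum : Summable (fun k : ℕ => (k : ℝ) * xiML ψ p q k) :=
      (summable_nat_add_iff 2).mp hG2
    have h01' : ∑ i ∈ Finset.range 2, ((i : ℝ) * xiML ψ p q i) = 0 := by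
      rw [Finset.sum_range_succ, Finset.sum_range_one, hxi1]
      simp
    have hsplit' := Summable.sum_add_tsum_nat_add 2 hGsum
    rw [h01', zero_add] at hsplit'
    have htail' : (∑' k : ℕ, ((k + 2 : ℕ) : ℝ) * xiML ψ p q (k + 2))
        = (Dn α β ν 1 q - Dn α β ν 1 p) / Dn α β ν 1 q := by
      calc (∑' k : ℕ, ((k + 2 : ℕ) : ℝ) * xiML ψ p q (k + 2))
          = ∑' k : ℕ, ((1 / Dn α β ν 1 q) * ((q - p) ^ (k + 1) / ((k + 1).factorial : ℝ) *
              ∫ x, x ^ (k + 2) * Real.exp (-(q * x)) ∂ν)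
            + (if k = 0 then 2 * β * (q - p) / Dn α β ν 1 q else 0)) := tsum_congr hGterm
        _ = (∑' k : ℕ, (1 / Dn α β ν 1 q) * ((q - p) ^ (k + 1) / ((k + 1).factorial : ℝ) *
              ∫ x, x ^ (k + 2) * Real.exp (-(q * x)) ∂ν))
            + ∑' k : ℕ, (if k = 0 then 2 * β * (q - p) / Dn α β ν 1 q else 0) :=
            Summable.tsum_add (hS'.mul_left _) (hasSum_ite_eq 0 _).summable
        _ = (1 / Dn α β ν 1 q) *
              (∫ x, x * Real.exp (-(q * x)) * (Real.exp ((q - p) * x) - 1) ∂ν)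
            + 2 * β * (q - p) / Dn α β ν 1 q := by
            rw [tsum_mul_left, hS'eq, (hasSum_ite_eq 0 _).tsum_eq]
        _ = (Dn α β ν 1 q - Dn α β ν 1 p) / Dn α β ν 1 q := by
            rw [hD1]
            generalize (∫ x, x * Real.exp (-(q * x)) * (Real.exp ((q - p) * x) - 1) ∂ν) = I
            field_simp
            ring
    have hmean : (∑' k : ℕ, (k : ℝ) * xiML ψ p q k)
        = 1 - Dn α β ν 1 p / Dn α β ν 1 q := by
      rw [← hsplit', htail']
      field_simp
    have hDppos : 0 ≤ Dn α β ν 1 p := by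
      have h := deriv_lower hν0 hν2 hβ (le_refl (0:ℝ)) hp' (α := α) (ν := ν)
      rw [Dn_zero_zero] at h
      rw [hψp] at hμ
      nlinarith
    refine ⟨hGsum, ?_, ?_, ?_⟩
    · rw [hDp, hDq]
      exact hmean
    · rw [hmean]
      have : 0 ≤ Dn α β ν 1 p / Dn α β ν 1 q := div_nonneg hDppos hM.le
      linarith
    · intro hpos
      rw [hDp] at hpos
      rw [hmean]
      have : 0 < Dn α β ν 1 p / Dn α β ν 1 q := div_pos hpos hM
      linarith
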